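/- Let U be a nonempty finite type (of feasible tours), V a finite type (of customers), z : U → Finset V a map assigning to each tour its set of visited customers, c : U → ℝ a routing-cost function with c(u) ≥ 0 for all u ∈ U, and Q : U → ℝ a cost function of the form Q(u) = q(z(u)) + c(u) for some q : Finset V → ℝ (i.e., apart from the additively entering routing cost, the cost of a decision depends only on the set of visited customers). Then there exists a prize vector θ : V → ℝ such that every u* ∈ U maximizing the prize-collecting objective u ↦ (∑_{i ∈ z(u)} θ(i)) − c(u) over U is a minimizer of Q over U. -/
import Mathlib


/-- Abstract form of Proposition 1: if the cost `Q` of a decision depends on the decision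
only through the set of visited customers, apart from an additively entering nonnegative
routing cost, then there exists a prize vector `θ` such that every maximizer of the
prize-collecting objective is a minimizer of `Q`. -/
theorem stmt_1 {U V : Type*} [Fintype U] [Nonempty U] [Fintype V]
    (z : U → Finset V) (c : U → ℝ) (hc : ∀ u, 0 ≤ c u)
    (Q : U → ℝ) (q : Finset V → ℝ) (hQ : ∀ u, Q u = q (z u) + c u) :
    ∃ θ : V → ℝ, ∀ ustar : U,
      (∀ u : U, (∑ i ∈ z u, θ i) - c u ≤ (∑ i ∈ z ustar, θ i) - c ustar) →
      ∀ u : U, Q ustar ≤ Q u := by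
  classical
  obtain ⟨u0, -, hu0⟩ := Finset.exists_min_image Finset.univ Q
    ⟨Classical.arbitrary U, Finset.mem_univ _⟩
  set M : ℝ := c u0 + 1 with hMdef
  have hMpos : 0 < M := by have := hc u0; linarith
  set θ : V → ℝ := fun i => if i ∈ z u0 then M else -M with hθdef
  have key : ∀ A : Finset V, A ≠ z u0 →
      M ≤ (∑ i ∈ z u0, θ i) - (∑ i ∈ A, θ i) := by
    intro A hA
    have h1 : ∑ i ∈ z u0 ∩ A, θ i + ∑ i ∈ z u0 \ A, θ i = ∑ i ∈ z u0, θ i :=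
      Finset.sum_inter_add_sum_sdiff _ _ _
    have h2 : ∑ i ∈ A ∩ z u0, θ i + ∑ i ∈ A \ z u0, θ i = ∑ i ∈ A, θ i :=
      Finset.sum_inter_add_sum_sdiff _ _ _
    have hcomm : ∑ i ∈ A ∩ z u0, θ i = ∑ i ∈ z u0 ∩ A, θ i := by
      rw [Finset.inter_comm]
    have hd1 : ∑ i ∈ z u0 \ A, θ i = M * ((z u0 \ A).card : ℝ) := by
      have hall : ∀ i ∈ z u0 \ A, θ i = M := by
        intro i hi
        simp [hθdef, (Finset.mem_sdiff.mp hi).1]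
      rw [Finset.sum_congr rfl hall, Finset.sum_const, nsmul_eq_mul, mul_comm]
    have hd2 : ∑ i ∈ A \ z u0, θ i = -M * ((A \ z u0).card : ℝ) := by
      have hall : ∀ i ∈ A \ z u0, θ i = -M := by
        intro i hi
        simp [hθdef, (Finset.mem_sdiff.mp hi).2]
      rw [Finset.sum_congr rfl hall, Finset.sum_const, nsmul_eq_mul, mul_comm]
    have hcard : 1 ≤ (z u0 \ A).card + (A \ z u0).card := by
      by_contra h
      push_neg at h
      have e1 : (z u0 \ A) = ∅ := Finset.card_eq_zero.mp (by omega)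
      have e2 : (A \ z u0) = ∅ := Finset.card_eq_zero.mp (by omega)
      exact hA (Finset.Subset.antisymm (Finset.sdiff_eq_empty_iff_subset.mp e2)
        (Finset.sdiff_eq_empty_iff_subset.mp e1))
    have hcardR : (1 : ℝ) ≤ ((z u0 \ A).card : ℝ) + ((A \ z u0).card : ℝ) := by
      exact_mod_cast hcard
    nlinarith [hd1, hd2, h1, h2, hcomm]
  refine ⟨θ, ?_⟩
  intro us hmax u
  have h0 := hmax u0
  by_cases hz : z us = z u0
  · rw [hz] at h0
    have hcc : c us ≤ c u0 := by linarith
    calc Q us = q (z u0) + c us := by rw [hQ, hz]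
      _ ≤ q (z u0) + c u0 := by linarith
      _ = Q u0 := (hQ u0).symm
      _ ≤ Q u := hu0 u (Finset.mem_univ u)
  · exfalso
    have hk := key (z us) hz
    have := hc us
    linarith
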